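/- arXiv:1811.03872 — 2 statements merged into one kernel-verified Lean document; each statement's English description precedes it below -/
import Mathlib

section
/- Let (α_n) be a decreasing positive sequence with α_n → 0 and A = {α_n e_n : n ∈ ℕ} ⊂ ℓ₂. Then the thickness exponent of A in ℓ₂ equals its box-counting dimension: τ(A; ℓ₂) = d_B(A) = limsup_{n→∞} (log n)/(−log α_n). -/
open Filter Metric Set Pointwise Topology

/-- `coverNum X ε` : minimal number of balls of radius `ε` with centres in `X` covering `X`. -/
noncomputable def coverNum {E : Type*} [SeminormedAddCommGroup E] (X : Set E) (ε : ℝ) : ℕ∞ :=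
  sInf {n : ℕ∞ | ∃ F : Finset E, ↑F ⊆ X ∧ (X ⊆ ⋃ c ∈ F, Metric.ball c ε) ∧ n = F.card}

/-- extended logarithm of an extended natural number. -/
noncomputable def elog (n : ℕ∞) : EReal :=
  if n = ⊤ then ⊤ else ((Real.log n.toNat : ℝ) : EReal)

/-- The upper box-counting dimension `d_B(X) = limsup_{ε → 0⁺} log N(X,ε) / (-log ε)`. -/
noncomputable def dimBox {E : Type*} [SeminormedAddCommGroup E] (X : Set E) : EReal :=
  Filter.limsup (fun ε : ℝ => elog (coverNum X ε) / ((-Real.log ε : ℝ) : EReal)) (𝓝[>] 0)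

/-- `thickNum X ε` : smallest dimension of a finite-dimensional subspace `V` with
`dist(x, V) ≤ ε` for all `x ∈ X` (`⊤` if none exists). -/
noncomputable def thickNum {E : Type*} [NormedAddCommGroup E] [NormedSpace ℝ E]
    (X : Set E) (ε : ℝ) : ℕ∞ :=
  sInf {n : ℕ∞ | ∃ V : Submodule ℝ E, FiniteDimensional ℝ V ∧ n = Module.finrank ℝ V ∧
    ∀ x ∈ X, Metric.infDist x (V : Set E) ≤ ε}

/-- The thickness exponent `τ(X) = limsup_{ε → 0⁺} log d(X,ε) / (-log ε)`. -/
noncomputable def thickness {E : Type*} [NormedAddCommGroup E] [NormedSpace ℝ E]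
    (X : Set E) : EReal :=
  Filter.limsup (fun ε : ℝ => elog (thickNum X ε) / ((-Real.log ε : ℝ) : EReal)) (𝓝[>] 0)

/-- `dualThickNum X θ ε` : minimal dimension of a subspace `U ⊆ E*` such that for all
`x, y ∈ X` with `‖x - y‖ ≥ ε` some `φ ∈ U` has `|φ(x-y)| ≥ ε^(1+θ)`. -/
noncomputable def dualThickNum {E : Type*} [NormedAddCommGroup E] [NormedSpace ℝ E]
    (X : Set E) (θ ε : ℝ) : ℕ∞ :=
  sInf {n : ℕ∞ | ∃ U : Submodule ℝ (E →L[ℝ] ℝ), FiniteDimensional ℝ U ∧ n = Module.finrank ℝ U ∧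
    ∀ x ∈ X, ∀ y ∈ X, ε ≤ ‖x - y‖ → ∃ φ ∈ U, ε ^ (1 + θ) ≤ |φ (x - y)|}

noncomputable def dualThickTheta {E : Type*} [NormedAddCommGroup E] [NormedSpace ℝ E]
    (X : Set E) (θ : ℝ) : EReal :=
  Filter.limsup (fun ε : ℝ => elog (dualThickNum X θ ε) / ((-Real.log ε : ℝ) : EReal)) (𝓝[>] 0)

/-- The dual thickness `τ*(X) = lim_{θ → 0⁺} τ*_θ(X)` (the limit exists by monotonicity and
equals the limsup as `θ → 0⁺`). -/
noncomputable def dualThickness {E : Type*} [NormedAddCommGroup E] [NormedSpace ℝ E]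
    (X : Set E) : EReal :=
  Filter.limsup (fun θ : ℝ => dualThickTheta X θ) (𝓝[>] 0)

/-- `sigmaNum X α ε` : minimal dimension of a subspace `V ⊆ E*` such that whenever
`x, y ∈ X` with `‖x - y‖ ≥ ε` there is `Φ ∈ V` with `‖Φ‖ = 1` and `|Φ(x-y)| ≥ α ε`. -/
noncomputable def sigmaNum {E : Type*} [NormedAddCommGroup E] [NormedSpace ℝ E]
    (X : Set E) (α ε : ℝ) : ℕ∞ :=
  sInf {n : ℕ∞ | ∃ V : Submodule ℝ (E →L[ℝ] ℝ), FiniteDimensional ℝ V ∧ n = Module.finrank ℝ V ∧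
    ∀ x ∈ X, ∀ y ∈ X, ε ≤ ‖x - y‖ → ∃ Φ ∈ V, ‖Φ‖ = 1 ∧ α * ε ≤ |Φ (x - y)|}

noncomputable def sigmaExp {E : Type*} [NormedAddCommGroup E] [NormedSpace ℝ E]
    (X : Set E) (α : ℝ) : EReal :=
  Filter.limsup (fun ε : ℝ => elog (sigmaNum X α ε) / ((-Real.log ε : ℝ) : EReal)) (𝓝[>] 0)


section Aux
set_option maxHeartbeats 1000000
open RealInnerProductSpace

lemma tendsto_mul_nhdsGT {d : ℝ} (hd : 0 < d) :
    Tendsto (fun x : ℝ => d * x) (𝓝[>] (0:ℝ)) (𝓝[>] (0:ℝ)) := by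
  apply tendsto_nhdsWithin_of_tendsto_nhds_of_eventually_within
  · simpa using (tendsto_const_nhds.mul (tendsto_nhdsWithin_of_tendsto_nhds tendsto_id) :
      Tendsto (fun x : ℝ => d * x) (𝓝[>] (0:ℝ)) (𝓝 (d * 0)))
  · filter_upwards [self_mem_nhdsWithin] with x hx
    exact mem_Ioi.2 (mul_pos hd hx)

lemma map_mul_nhdsGT {c : ℝ} (hc : 0 < c) :
    Filter.map (fun x : ℝ => c * x) (𝓝[>] (0:ℝ)) = 𝓝[>] (0:ℝ) := by
  refine le_antisymm (tendsto_mul_nhdsGT hc) ?_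
  have h2 := Filter.map_mono (m := fun x : ℝ => c * x) (tendsto_mul_nhdsGT (inv_pos.2 hc))
  rw [Filter.map_map] at h2
  have : ((fun x : ℝ => c * x) ∘ fun x : ℝ => c⁻¹ * x) = id := by
    ext x; simp [← mul_assoc, mul_inv_cancel₀ hc.ne']
  rwa [this, Filter.map_id] at h2

lemma limsup_comp_mul {c : ℝ} (hc : 0 < c) (F : ℝ → EReal) :
    limsup (fun ε => F (c * ε)) (𝓝[>] (0:ℝ)) = limsup F (𝓝[>] (0:ℝ)) := by
  conv_rhs => rw [← map_mul_nhdsGT hc]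
  rw [Filter.limsup, Filter.limsup, Filter.map_map]
  rfl


lemma key_le {β : Type*} {l : Filter β} [l.NeBot] {u v b c : β → ℝ} {K : ℝ}
    (hb : Tendsto b l atTop) (hc : Tendsto c l atTop)
    (hv : ∀ᶠ x in l, 0 ≤ v x)
    (hbc : ∀ᶠ x in l, c x ≤ b x + K)
    (huv : ∀ᶠ x in l, u x ≤ v x + K) :
    limsup (fun x => ((u x / b x : ℝ) : EReal)) l ≤
      limsup (fun x => ((v x / c x : ℝ) : EReal)) l := by
  set L := limsup (fun x => ((v x / c x : ℝ) : EReal)) l with hL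
  have hL0 : (0 : EReal) ≤ L := by
    refine le_limsup_of_frequently_le (Eventually.frequently ?_) (by isBoundedDefault)
    filter_upwards [hv, hc.eventually_gt_atTop 0] with x h1 h2
    exact_mod_cast div_nonneg h1 h2.le
  rw [← EReal.le_of_forall_lt_iff_le]
  intro z hz
  have hz0 : (0:ℝ) < z := by exact_mod_cast lt_of_le_of_lt hL0 hz
  obtain ⟨r, hr1, hr2⟩ := EReal.exists_between_coe_real hz
  have hr0 : (0:ℝ) < r := by exact_mod_cast lt_of_le_of_lt hL0 hr1
  have hrz : r < z := by exact_mod_cast hr2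
  have ev1 : ∀ᶠ x in l, ((v x / c x : ℝ) : EReal) < (r : EReal) :=
    eventually_lt_of_limsup_lt hr1
  refine limsup_le_of_le (by isBoundedDefault) ?_
  filter_upwards [ev1, hv, huv, hbc, hc.eventually_gt_atTop 0,
    hb.eventually_gt_atTop 0, hb.eventually_ge_atTop ((r * K + K) / (z - r))] with x h1 h2 h3 h4 h5 h6 h7
  have h1' : v x / c x < r := by exact_mod_cast h1
  have hvc : v x < r * c x := (div_lt_iff₀ h5).mp h1'
  have : u x ≤ r * b x + (r * K + K) := by nlinarith
  have hub : u x ≤ z * b x := by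
    have : (r * K + K) ≤ (z - r) * b x := by
      rw [div_le_iff₀ (by linarith : (0:ℝ) < z - r)] at h7
      linarith
    nlinarith
  have : u x / b x ≤ z := (div_le_iff₀ h6).mpr (by linarith)
  exact_mod_cast this

noncomputable section
abbrev E2 : Type := lp (fun _ : ℕ => ℝ) 2


lemma norm_single2 (n : ℕ) (x : ℝ) : ‖(lp.single 2 n x : E2)‖ = |x| := by
  have := lp.norm_single (E := fun _ : ℕ => ℝ) (p := 2) (by norm_num) n x
  simpa using this

lemma parseval2 (f : E2) : ‖f‖ ^ 2 = ∑' n, (f n)^2 := by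
  have := lp.norm_rpow_eq_tsum (E := fun _ : ℕ => ℝ) (p := 2) (by norm_num) f
  simp only [ENNReal.toReal_ofNat, Real.rpow_two, Real.norm_eq_abs, sq_abs] at this
  exact this

lemma summable_sq2 (f : E2) : Summable (fun n => (f n)^2) := by
  have h := (lp.memℓp f).summable (p := 2) (by norm_num)
  simp only [ENNReal.toReal_ofNat, Real.rpow_two, Real.norm_eq_abs, sq_abs] at h
  exact h

lemma inner_single2 (n : ℕ) (x : ℝ) (f : E2) : ⟪(lp.single 2 n x : E2), f⟫ = x * f n := by
  have := lp.inner_single_left (𝕜 := ℝ) (G := fun _ : ℕ => ℝ) n x f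
  simpa [RCLike.inner_apply, mul_comm] using this

lemma coord_bound (V : Submodule ℝ E2) [FiniteDimensional ℝ V]
    (w : OrthonormalBasis (Fin (Module.finrank ℝ V)) ℝ V) (v : E2) (hv : v ∈ V) (n : ℕ) :
    (v n)^2 ≤ ‖v‖^2 * ∑ i, (((w i : E2)) n)^2 := by
  set m : V := ⟨v, hv⟩
  have hrep : (v : ℕ → ℝ) n = ∑ i, w.repr m i * ((w i : E2) n) := by
    have h1 : ∑ i, w.repr m i • w i = m := w.sum_repr m
    have h2 : (↑(∑ i, w.repr m i • w i) : E2) = v := by rw [h1]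
    have h3 : (↑(∑ i, w.repr m i • w i) : E2) = ∑ i, w.repr m i • (w i : E2) := by
      push_cast
      rfl
    rw [h3] at h2
    have h4 := congrFun (congrArg (fun f : E2 => (f : ℕ → ℝ)) h2) n
    simp only [lp.coeFn_sum, Finset.sum_apply] at h4
    rw [← h4]
    congr 1
  have hCS := Finset.sum_mul_sq_le_sq_mul_sq Finset.univ (fun i => w.repr m i)
      (fun i => ((w i : E2) n))
  have hnorm : ∑ i, (w.repr m i)^2 = ‖v‖^2 := by
    have h5 : ‖w.repr m‖ = ‖m‖ := w.repr.norm_map m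
    have h6 : ‖w.repr m‖^2 = ∑ i, (w.repr m i)^2 := by
      rw [EuclideanSpace.norm_eq]
      rw [Real.sq_sqrt (by positivity)]
      simp [sq_abs]
    have h7 : ‖m‖ = ‖v‖ := rfl
    rw [← h6, h5, h7]
  calc (v n)^2 = (∑ i, w.repr m i * ((w i : E2) n))^2 := by rw [hrep]
    _ ≤ (∑ i, (w.repr m i)^2) * ∑ i, ((w i : E2) n)^2 := hCS
    _ = ‖v‖^2 * ∑ i, ((w i : E2) n)^2 := by rw [hnorm]

lemma bessel_card {α : ℕ → ℝ} (hpos : ∀ n, 0 < α n) {ε : ℝ} (hε : 0 < ε)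
    (V : Submodule ℝ E2) [FiniteDimensional ℝ V]
    (S : Finset ℕ) (hS : ∀ n ∈ S, 2 * ε^2 ≤ (α n)^2)
    (hdist : ∀ n ∈ S, infDist (lp.single 2 n (α n) : E2) (V : Set E2) ≤ ε) :
    S.card ≤ 2 * Module.finrank ℝ V := by
  classical
  set d := Module.finrank ℝ V with hd
  set w : OrthonormalBasis (Fin d) ℝ V := stdOrthonormalBasis ℝ V with hw
  set q : ℕ → ℝ := fun n => ∑ i, ((w i : E2) n)^2 with hq
  -- pointwise lower bound
  have hqn : ∀ n ∈ S, (1:ℝ)/2 ≤ q n := by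
    intro n hn
    have hα2 := hS n hn
    have hαn := hpos n
    -- show α n ^ 2 * (1 - q n) ≤ ε ^ 2
    have hmain : (α n)^2 * (1 - q n) ≤ ε^2 := by
      by_contra hcon
      push_neg at hcon
      -- infDist < sqrt ((α n)^2 * (1 - q n))
      have hVne : (V : Set E2).Nonempty := ⟨0, V.zero_mem⟩
      have h1 : infDist (lp.single 2 n (α n) : E2) (V : Set E2) <
          Real.sqrt ((α n)^2 * (1 - q n)) := by
        calc infDist _ _ ≤ ε := hdist n hn
          _ = Real.sqrt (ε^2) := by rw [Real.sqrt_sq hε.le]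
          _ < _ := by
            apply Real.sqrt_lt_sqrt (by positivity) hcon
      obtain ⟨v, hvV, hvlt⟩ := (infDist_lt_iff hVne).mp h1
      rw [dist_eq_norm] at hvlt
      -- expand the square
      have hexp : ‖(lp.single 2 n (α n) : E2) - v‖^2 =
          (α n)^2 - 2 * (α n * v n) + ‖v‖^2 := by
        rw [@norm_sub_sq_real]
        rw [norm_single2, inner_single2, sq_abs]
      have hcoord : (v n)^2 ≤ ‖v‖^2 * q n := coord_bound V w v hvV n
      have hq0 : 0 ≤ q n := by positivity
      have hB : 0 ≤ (α n)^2 * q n + ‖v‖^2 := by positivity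
      have ha2 : (2 * (α n * v n))^2 ≤ ((α n)^2 * q n + ‖v‖^2)^2 := by
        nlinarith [mul_le_mul_of_nonneg_left hcoord (by positivity : (0:ℝ) ≤ 4 * (α n)^2),
          sq_nonneg ((α n)^2 * q n - ‖v‖^2)]
      have habs : 2 * (α n * v n) ≤ (α n)^2 * q n + ‖v‖^2 := by
        calc 2 * (α n * v n) ≤ |2 * (α n * v n)| := le_abs_self _
          _ = Real.sqrt ((2 * (α n * v n))^2) := (Real.sqrt_sq_eq_abs _).symm
          _ ≤ Real.sqrt (((α n)^2 * q n + ‖v‖^2)^2) := Real.sqrt_le_sqrt ha2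
          _ = |(α n)^2 * q n + ‖v‖^2| := Real.sqrt_sq_eq_abs _
          _ = (α n)^2 * q n + ‖v‖^2 := abs_of_nonneg hB
      have hlow : (α n)^2 * (1 - q n) ≤ ‖(lp.single 2 n (α n) : E2) - v‖^2 := by
        rw [hexp]; nlinarith
      have hup : ‖(lp.single 2 n (α n) : E2) - v‖^2 < (α n)^2 * (1 - q n) := by
        have h0 : (0:ℝ) ≤ ‖(lp.single 2 n (α n) : E2) - v‖ := norm_nonneg _
        have := Real.sq_sqrt (le_of_lt (lt_of_le_of_lt (by positivity) hcon) :
            (0:ℝ) ≤ (α n)^2 * (1 - q n))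
        nlinarith [hvlt, Real.sqrt_nonneg ((α n)^2 * (1 - q n))]
      linarith
    -- conclude
    have hpos2 : (0:ℝ) < (α n)^2 := by positivity
    have h8 : (α n)^2 * (1 - q n) ≤ (α n)^2 * (1/2) := by nlinarith
    have h9 : 1 - q n ≤ 1/2 := (mul_le_mul_iff_right₀ hpos2).mp h8
    linarith
  -- sum bound
  have hsum : ∑ n ∈ S, q n ≤ (d : ℝ) := by
    have h1 : ∑ n ∈ S, q n = ∑ i : Fin d, ∑ n ∈ S, ((w i : E2) n)^2 := Finset.sum_comm
    have h2 : ∀ i : Fin d, ∑ n ∈ S, ((w i : E2) n)^2 ≤ 1 := by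
      intro i
      have hsummable := summable_sq2 (w i : E2)
      have h3 : ∑ n ∈ S, ((w i : E2) n)^2 ≤ ∑' n, ((w i : E2) n)^2 :=
        Summable.sum_le_tsum S (fun n _ => sq_nonneg _) hsummable
      have h4 : ∑' n, ((w i : E2) n)^2 = ‖(w i : E2)‖^2 := (parseval2 _).symm
      have h5 : ‖(w i : E2)‖ = 1 := by
        have := w.orthonormal.1 i
        exact this
      rw [h4, h5] at h3
      simpa using h3
    calc ∑ n ∈ S, q n = _ := h1
      _ ≤ ∑ _i : Fin d, (1:ℝ) := Finset.sum_le_sum (fun i _ => h2 i)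
      _ = d := by rw [Finset.sum_const, Finset.card_univ, Fintype.card_fin, nsmul_eq_mul, mul_one]
  have hcard : (S.card : ℝ) * (1/2) ≤ ∑ n ∈ S, q n := by
    calc (S.card : ℝ) * (1/2) = ∑ _n ∈ S, (1:ℝ)/2 := by
          rw [Finset.sum_const, nsmul_eq_mul]
      _ ≤ ∑ n ∈ S, q n := Finset.sum_le_sum hqn
  have : (S.card : ℝ) ≤ 2 * d := by linarith
  exact_mod_cast this


variable {α : ℕ → ℝ}

def Mnum (α : ℕ → ℝ) (δ : ℝ) : ℕ := sInf {n | α n < δ}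

section Mfacts
variable (hpos : ∀ n, 0 < α n) (hdec : Antitone α) (hlim : Tendsto α atTop (𝓝 0))

lemma Mnum_lt (hlim : Tendsto α atTop (𝓝 0)) {δ : ℝ} (hδ : 0 < δ) : α (Mnum α δ) < δ := by
  have hne : {n | α n < δ}.Nonempty := by
    obtain ⟨N, hN⟩ := (hlim.eventually (eventually_lt_nhds hδ)).exists
    exact ⟨N, hN⟩
  exact Nat.sInf_mem hne

lemma Mnum_ge {δ : ℝ} {k : ℕ} (hk : k < Mnum α δ) : δ ≤ α k := by
  by_contra h
  push_neg at h
  exact absurd (Nat.sInf_le h) (not_le.2 hk)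

lemma Mnum_lt' (hdec : Antitone α) (hlim : Tendsto α atTop (𝓝 0)) {δ : ℝ} (hδ : 0 < δ)
    {k : ℕ} (hk : Mnum α δ ≤ k) : α k < δ :=
  lt_of_le_of_lt (hdec hk) (Mnum_lt hlim hδ)

lemma Mnum_eventually_ge (hpos : ∀ n, 0 < α n) (hdec : Antitone α)
    (hlim : Tendsto α atTop (𝓝 0)) (N : ℕ) :
    ∀ᶠ δ in 𝓝[>] (0:ℝ), N ≤ Mnum α δ := by
  filter_upwards [Ioo_mem_nhdsGT_of_mem
    (⟨le_refl 0, hpos N⟩ : (0:ℝ) ∈ Set.Ico 0 (α N))] with δ hδ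
  by_contra h
  push_neg at h
  exact absurd (Mnum_lt' hdec hlim hδ.1 h.le) (not_lt.2 hδ.2.le)

end Mfacts


section counting
variable (hpos : ∀ n, 0 < α n) (hdec : Antitone α) (hlim : Tendsto α atTop (𝓝 0))
include hpos hdec hlim

local notation "aseq" => fun n : ℕ => (lp.single 2 n (α n) : E2)
local notation "Aset" => Set.range (fun n : ℕ => (lp.single 2 n (α n) : E2))

lemma exists_approx_subspace {ε : ℝ} (hε : 0 < ε) :
    ∃ V : Submodule ℝ E2, ∃ _ : FiniteDimensional ℝ V,
      Module.finrank ℝ V ≤ Mnum α ε ∧ ∀ x ∈ Aset, infDist x (V : Set E2) ≤ ε := by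
  classical
  set F : Finset E2 := (Finset.range (Mnum α ε)).image aseq with hF
  set V : Submodule ℝ E2 := Submodule.span ℝ (F : Set E2) with hV
  have hfd : FiniteDimensional ℝ V := FiniteDimensional.span_finset ℝ F
  refine ⟨V, hfd, ?_, ?_⟩
  · have h3 : Module.finrank ℝ V ≤ F.card := finrank_span_finset_le_card F
    have h4 : F.card ≤ Mnum α ε := (Finset.card_image_le).trans (by simp)
    exact h3.trans h4
  · rintro x ⟨n, rfl⟩
    by_cases hn : n < Mnum α ε
    · have hmem : (lp.single 2 n (α n) : E2) ∈ V := by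
        apply Submodule.subset_span
        simp only [hF, Finset.coe_image, Finset.coe_range]
        exact ⟨n, by simpa using hn, rfl⟩
      rw [infDist_zero_of_mem hmem]
      exact hε.le
    · push_neg at hn
      have h1 : infDist (lp.single 2 n (α n) : E2) (V : Set E2) ≤
          dist (lp.single 2 n (α n) : E2) 0 := infDist_le_dist_of_mem (V.zero_mem)
      rw [dist_zero_right, norm_single2, abs_of_pos (hpos n)] at h1
      exact h1.trans (Mnum_lt' hdec hlim hε hn).le

lemma thickNum_le_Mnum {ε : ℝ} (hε : 0 < ε) :
    thickNum Aset ε ≤ (Mnum α ε : ℕ∞) := by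
  obtain ⟨V, hfd, hrank, hdist⟩ := exists_approx_subspace hpos hdec hlim hε
  have h2 : thickNum Aset ε ≤ (Module.finrank ℝ V : ℕ∞) := sInf_le ⟨V, hfd, rfl, hdist⟩
  exact h2.trans (by exact_mod_cast hrank)

lemma thickNum_ne_top {ε : ℝ} (hε : 0 < ε) : thickNum Aset ε ≠ ⊤ :=
  ((thickNum_le_Mnum hpos hdec hlim hε).trans_lt (WithTop.coe_lt_top _)).ne

lemma Mnum_le_thickNum {ε : ℝ} (hε : 0 < ε) :
    (Mnum α (Real.sqrt 2 * ε) : ℕ∞) ≤ 2 * thickNum Aset ε := by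
  classical
  have hne : {n : ℕ∞ | ∃ V : Submodule ℝ E2, FiniteDimensional ℝ V ∧
      n = Module.finrank ℝ V ∧ ∀ x ∈ Aset, Metric.infDist x (V : Set E2) ≤ ε}.Nonempty := by
    obtain ⟨V, hfd, hrank, hdist⟩ := exists_approx_subspace hpos hdec hlim hε
    exact ⟨_, V, hfd, rfl, hdist⟩
  obtain ⟨V, hfd, heq, hdist⟩ := csInf_mem hne
  have hS : ∀ n ∈ Finset.range (Mnum α (Real.sqrt 2 * ε)), 2 * ε^2 ≤ (α n)^2 := by
    intro n hn
    rw [Finset.mem_range] at hn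
    have := Mnum_ge hn
    calc 2 * ε^2 = (Real.sqrt 2 * ε)^2 := by
          rw [mul_pow, Real.sq_sqrt (by norm_num : (0:ℝ) ≤ 2)]
      _ ≤ (α n)^2 := by
          apply pow_le_pow_left₀ (by positivity) this
  have hdist' : ∀ n ∈ Finset.range (Mnum α (Real.sqrt 2 * ε)),
      infDist (lp.single 2 n (α n) : E2) (V : Set E2) ≤ ε :=
    fun n _ => hdist _ ⟨n, rfl⟩
  have hcard := bessel_card hpos hε V (Finset.range (Mnum α (Real.sqrt 2 * ε))) hS hdist'
  rw [Finset.card_range] at hcard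
  have : thickNum Aset ε = (Module.finrank ℝ V : ℕ∞) := heq
  rw [this]
  exact_mod_cast hcard

end counting

section cover
variable (hpos : ∀ n, 0 < α n) (hdec : Antitone α) (hlim : Tendsto α atTop (𝓝 0))
include hpos hdec hlim

local notation "aseq" => fun n : ℕ => (lp.single 2 n (α n) : E2)
local notation "Aset" => Set.range (fun n : ℕ => (lp.single 2 n (α n) : E2))

omit hdec hlim in
lemma dist_aseq {k l : ℕ} (hkl : k ≠ l) :
    α k ≤ dist (lp.single 2 k (α k) : E2) (lp.single 2 l (α l) : E2) := by
  have h1 : ((lp.single 2 k (α k) : E2) - (lp.single 2 l (α l) : E2)) k = α k := by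
    rw [lp.coeFn_sub, Pi.sub_apply, lp.single_apply_self, lp.single_apply_ne 2 l _ hkl, sub_zero]
  have h2 := lp.norm_apply_le_norm (by norm_num : (2 : ENNReal) ≠ 0)
    ((lp.single 2 k (α k) : E2) - (lp.single 2 l (α l) : E2)) k
  rw [h1, Real.norm_eq_abs] at h2
  rw [dist_eq_norm]
  exact (le_abs_self _).trans h2

lemma coverNum_le_Mnum {ε : ℝ} (hε : 0 < ε) :
    coverNum Aset ε ≤ (Mnum α (ε/2) + 1 : ℕ) := by
  classical
  set m := Mnum α (ε/2) with hm
  set F : Finset E2 := (Finset.range (m+1)).image aseq with hF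
  have hsub : (F : Set E2) ⊆ Aset := by
    intro x hx
    simp only [hF, Finset.coe_image] at hx
    obtain ⟨n, _, rfl⟩ := hx
    exact ⟨n, rfl⟩
  have hcov : Aset ⊆ ⋃ c ∈ F, Metric.ball c ε := by
    rintro x ⟨n, rfl⟩
    by_cases hn : n < m + 1
    · exact Set.mem_iUnion₂.2 ⟨_, Finset.mem_image_of_mem _ (Finset.mem_range.2 hn),
        Metric.mem_ball_self hε⟩
    · push_neg at hn
      refine Set.mem_iUnion₂.2 ⟨_, Finset.mem_image_of_mem _ (Finset.mem_range.2 (Nat.lt_succ_self m)), ?_⟩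
      rw [Metric.mem_ball, dist_eq_norm]
      have h1 : α n < ε/2 := Mnum_lt' hdec hlim (by linarith) (le_trans (Nat.le_succ m) hn)
      have h2 : α m < ε/2 := Mnum_lt hlim (by linarith)
      calc ‖(lp.single 2 n (α n) : E2) - (lp.single 2 m (α m) : E2)‖
          ≤ ‖(lp.single 2 n (α n) : E2)‖ + ‖(lp.single 2 m (α m) : E2)‖ := norm_sub_le _ _
        _ = α n + α m := by rw [norm_single2, norm_single2, abs_of_pos (hpos n), abs_of_pos (hpos m)]
        _ < ε := by linarith
  have hmem : (F.card : ℕ∞) ∈ {n : ℕ∞ | ∃ F : Finset E2, ↑F ⊆ Aset ∧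
      (Aset ⊆ ⋃ c ∈ F, Metric.ball c ε) ∧ n = F.card} := ⟨F, hsub, hcov, rfl⟩
  refine (sInf_le hmem).trans ?_
  have : F.card ≤ m + 1 := (Finset.card_image_le).trans (by simp)
  exact_mod_cast this

omit hdec hlim in
lemma Mnum_le_coverNum {ε : ℝ} (hε : 0 < ε) :
    (Mnum α (2*ε) : ℕ∞) ≤ coverNum Aset ε := by
  classical
  apply le_sInf
  rintro k ⟨F, hsub, hcov, rfl⟩
  have hchoice : ∀ n ∈ Finset.range (Mnum α (2*ε)), ∃ c ∈ F,
      (lp.single 2 n (α n) : E2) ∈ Metric.ball c ε := by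
    intro n _
    have := hcov ⟨n, rfl⟩
    simpa using this
  choose c hcF hcball using hchoice
  classical
  set g : ℕ → E2 := fun n => if h : n ∈ Finset.range (Mnum α (2*ε)) then c n h else 0 with hg
  have hcard := Finset.card_le_card_of_injOn (s := Finset.range (Mnum α (2*ε))) (t := F) g ?_ ?_
  · rw [Finset.card_range] at hcard
    exact_mod_cast hcard
  · intro n hn
    simp only [hg, dif_pos (Finset.mem_coe.1 hn)]
    exact hcF n _
  · intro n hn l hl h
    simp only [Finset.mem_coe] at hn hl
    simp only [hg, dif_pos hn, dif_pos hl] at h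
    by_contra hne
    have h1 := hcball n hn
    have h2 := hcball l hl
    rw [h] at h1
    have h3 : dist (lp.single 2 n (α n) : E2) (lp.single 2 l (α l) : E2) < 2*ε := by
      calc dist _ _ ≤ dist (lp.single 2 n (α n) : E2) (c l hl) +
            dist (c l hl) (lp.single 2 l (α l) : E2) := dist_triangle _ _ _
        _ < ε + ε := by
            rw [Metric.mem_ball] at h1 h2
            rw [dist_comm (c l hl)]
            linarith
        _ = 2*ε := by ring
    have h4 : (2:ℝ)*ε ≤ α n := Mnum_ge (Finset.mem_range.1 hn)
    exact absurd (lt_of_le_of_lt (h4.trans (dist_aseq hpos hne)) h3) (lt_irrefl _)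

omit hdec hlim in
lemma coverNum_ne_top' {ε : ℝ} (hε : 0 < ε) (h : coverNum Aset ε ≤ ((Mnum α (ε/2) + 1 : ℕ) : ℕ∞)) :
    coverNum Aset ε ≠ ⊤ :=
  (h.trans_lt (WithTop.coe_lt_top _)).ne

lemma coverNum_ne_top {ε : ℝ} (hε : 0 < ε) : coverNum Aset ε ≠ ⊤ :=
  ((coverNum_le_Mnum hpos hdec hlim hε).trans_lt (WithTop.coe_lt_top _)).ne

end cover

-- ### logarithm helpers
lemma natlog_nonneg (n : ℕ) : 0 ≤ Real.log n := by
  rcases Nat.eq_zero_or_pos n with h | h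
  · simp [h]
  · exact Real.log_nonneg (by exact_mod_cast h)

lemma natlog_mono {a b : ℕ} (h : a ≤ b) : Real.log a ≤ Real.log b := by
  rcases Nat.eq_zero_or_pos a with h0 | h0
  · simp only [h0, Nat.cast_zero, Real.log_zero]
    exact natlog_nonneg b
  · exact Real.log_le_log (by exact_mod_cast h0) (by exact_mod_cast h)

lemma natlog_twice {m k : ℕ} (h : m ≤ 2 * k) : Real.log m ≤ Real.log k + Real.log 2 := by
  rcases Nat.eq_zero_or_pos k with h0 | h0
  · have hm : m = 0 := by omega
    simp only [hm, h0, Nat.cast_zero, Real.log_zero, zero_add]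
    exact Real.log_nonneg (by norm_num)
  · calc Real.log m ≤ Real.log ((2 * k : ℕ)) := natlog_mono h
      _ = Real.log k + Real.log 2 := by
          push_cast
          rw [Real.log_mul (by norm_num) (by positivity)]
          ring

lemma tendsto_neg_log : Tendsto (fun ε : ℝ => -Real.log ε) (𝓝[>] 0) atTop :=
  tendsto_neg_atBot_atTop.comp Real.tendsto_log_nhdsGT_zero

lemma tendsto_neg_log_mul {c : ℝ} (hc : 0 < c) :
    Tendsto (fun ε : ℝ => -Real.log (c * ε)) (𝓝[>] 0) atTop :=
  tendsto_neg_log.comp (tendsto_mul_nhdsGT hc)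

-- ### the squeeze lemma
section squeeze
variable (hpos : ∀ n, 0 < α n) (hdec : Antitone α) (hlim : Tendsto α atTop (𝓝 0))
include hpos hdec hlim

lemma limsup_quot_eq_LM (T : ℝ → ℕ) {c₁ c₂ : ℝ} (hc₁ : 0 < c₁) (hc₂ : 0 < c₂)
    (h1 : ∀ᶠ ε in 𝓝[>] (0:ℝ), T ε ≤ 2 * Mnum α (c₁ * ε))
    (h2 : ∀ᶠ ε in 𝓝[>] (0:ℝ), Mnum α (c₂ * ε) ≤ 2 * T ε) :
    limsup (fun ε : ℝ => ((Real.log (T ε) / (-Real.log ε) : ℝ) : EReal)) (𝓝[>] 0)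
      = limsup (fun ε : ℝ => ((Real.log (Mnum α ε) / (-Real.log ε) : ℝ) : EReal)) (𝓝[>] 0) := by
  have hεpos : ∀ᶠ ε : ℝ in 𝓝[>] (0:ℝ), 0 < ε := self_mem_nhdsWithin
  apply le_antisymm
  · have hle := key_le (u := fun ε => Real.log (T ε))
      (v := fun ε => Real.log (Mnum α (c₁ * ε)))
      (b := fun ε : ℝ => -Real.log ε) (c := fun ε : ℝ => -Real.log (c₁ * ε))
      (K := Real.log 2 + |Real.log c₁|)
      tendsto_neg_log (tendsto_neg_log_mul hc₁)
      (Eventually.of_forall (fun ε => natlog_nonneg _))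
      ?_ ?_
    · refine hle.trans (le_of_eq ?_)
      exact limsup_comp_mul hc₁
        (fun ε : ℝ => ((Real.log (Mnum α ε) / (-Real.log ε) : ℝ) : EReal))
    · filter_upwards [hεpos] with ε hε
      rw [Real.log_mul (ne_of_gt hc₁) (ne_of_gt hε)]
      have := abs_nonneg (Real.log c₁)
      have := neg_abs_le (Real.log c₁)
      have := Real.log_nonneg (by norm_num : (1:ℝ) ≤ 2)
      linarith
    · filter_upwards [h1] with ε h
      have := natlog_twice h
      have := abs_nonneg (Real.log c₁)
      linarith
  · have hle := key_le (u := fun ε => Real.log (Mnum α ε))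
      (v := fun ε => Real.log (T (c₂⁻¹ * ε)))
      (b := fun ε : ℝ => -Real.log ε) (c := fun ε : ℝ => -Real.log (c₂⁻¹ * ε))
      (K := Real.log 2 + |Real.log c₂⁻¹|)
      tendsto_neg_log (tendsto_neg_log_mul (inv_pos.2 hc₂))
      (Eventually.of_forall (fun ε => natlog_nonneg _))
      ?_ ?_
    · refine (le_of_eq ?_).trans hle |>.trans (le_of_eq ?_) <;> [rfl;
        exact limsup_comp_mul (inv_pos.2 hc₂)
          (fun ε : ℝ => ((Real.log (T ε) / (-Real.log ε) : ℝ) : EReal))]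
    · filter_upwards [hεpos] with ε hε
      rw [Real.log_mul (by positivity) (ne_of_gt hε)]
      have := abs_nonneg (Real.log c₂⁻¹)
      have := neg_abs_le (Real.log c₂⁻¹)
      have := Real.log_nonneg (by norm_num : (1:ℝ) ≤ 2)
      linarith
    · have h2' := (tendsto_mul_nhdsGT (inv_pos.2 hc₂)).eventually h2
      filter_upwards [h2'] with ε h
      have heq : c₂ * (c₂⁻¹ * ε) = ε := by field_simp
      rw [heq] at h
      have := natlog_twice h
      have := abs_nonneg (Real.log c₂⁻¹)
      linarith

end squeeze

lemma limsup_comp_seq (F : ℝ → EReal) (g : ℕ → ℝ) :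
    limsup F (Filter.map g atTop) = limsup (fun n => F (g n)) atTop := by
  rw [Filter.limsup, Filter.limsup, Filter.map_map]
  rfl

section part3
variable (hpos : ∀ n, 0 < α n) (hdec : Antitone α) (hlim : Tendsto α atTop (𝓝 0))
include hpos hdec hlim

lemma LM_eq_S :
    limsup (fun ε : ℝ => ((Real.log (Mnum α ε) / (-Real.log ε) : ℝ) : EReal)) (𝓝[>] 0)
      = limsup (fun n : ℕ => ((Real.log n / (-Real.log (α n)) : ℝ) : EReal)) atTop := by
  have hα1 : ∀ᶠ n : ℕ in atTop, α n < 1 := hlim.eventually (eventually_lt_nhds one_pos)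
  set S := limsup (fun n : ℕ => ((Real.log n / (-Real.log (α n)) : ℝ) : EReal)) atTop with hSdef
  apply le_antisymm
  · -- LM ≤ S
    have hS0 : (0:EReal) ≤ S := by
      refine le_limsup_of_frequently_le (Eventually.frequently ?_) (by isBoundedDefault)
      filter_upwards [hα1] with n h1
      have hd : (0:ℝ) ≤ -Real.log (α n) := by
        have := Real.log_neg (hpos n) h1
        linarith
      have : (0:ℝ) ≤ Real.log n / (-Real.log (α n)) := div_nonneg (natlog_nonneg n) hd
      exact_mod_cast this
    rw [← EReal.le_of_forall_lt_iff_le]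
    intro z hz
    have hz0 : (0:ℝ) < z := by exact_mod_cast lt_of_le_of_lt hS0 hz
    obtain ⟨r, hr1, hr2⟩ := EReal.exists_between_coe_real hz
    have hr0 : (0:ℝ) < r := by exact_mod_cast lt_of_le_of_lt hS0 hr1
    have hrz : r < z := by exact_mod_cast hr2
    have ev1 : ∀ᶠ n : ℕ in atTop,
        ((Real.log n / (-Real.log (α n)) : ℝ) : EReal) < (r : EReal) :=
      eventually_lt_of_limsup_lt hr1
    obtain ⟨N, hN⟩ := eventually_atTop.1 (ev1.and hα1)
    have hkey : ∀ n ≥ N, Real.log n ≤ r * (-Real.log (α n)) := by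
      intro n hn
      obtain ⟨h1, h2⟩ := hN n hn
      have hd : (0:ℝ) < -Real.log (α n) := by
        have := Real.log_neg (hpos n) h2
        linarith
      have h1' : Real.log n / (-Real.log (α n)) < r := by exact_mod_cast h1
      exact ((div_lt_iff₀ hd).1 h1').le
    refine limsup_le_of_le (by isBoundedDefault) ?_
    filter_upwards [Mnum_eventually_ge hpos hdec hlim (N + 2), self_mem_nhdsWithin,
      Ioo_mem_nhdsGT_of_mem (⟨le_refl 0, one_pos⟩ : (0:ℝ) ∈ Set.Ico 0 1),
      tendsto_neg_log.eventually_ge_atTop (Real.log 2 / (z - r))] with ε hM hε hε1 hlog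
    have hε0 : (0:ℝ) < ε := hε
    set m := Mnum α ε with hm
    have hm2 : 2 ≤ m := by omega
    have hmN : N ≤ m - 1 := by omega
    have hlt : m - 1 < Mnum α ε := by omega
    have hαm : ε ≤ α (m - 1) := Mnum_ge hlt
    have h5' : m ≤ 2 * (m - 1) := by omega
    have h5 : Real.log m ≤ Real.log ((m - 1 : ℕ)) + Real.log 2 := natlog_twice h5'
    have h6 : Real.log ((m-1 : ℕ)) ≤ r * (-Real.log (α (m-1))) := hkey _ hmN
    have h7 : -Real.log (α (m-1)) ≤ -Real.log ε := by
      have := Real.log_le_log hε0 hαm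
      linarith
    have hbε : (0:ℝ) < -Real.log ε := by
      have := Real.log_neg hε0 hε1.2
      linarith
    have h8 : Real.log m ≤ r * (-Real.log ε) + Real.log 2 := by nlinarith
    have h9 : Real.log m ≤ z * (-Real.log ε) := by
      have h10 : Real.log 2 ≤ (z - r) * (-Real.log ε) := by
        rw [div_le_iff₀ (by linarith : (0:ℝ) < z - r)] at hlog
        linarith
      nlinarith
    have : Real.log m / (-Real.log ε) ≤ z := (div_le_iff₀ hbε).2 h9
    exact_mod_cast this
  · -- S ≤ LM
    have hmap : Filter.map α atTop ≤ 𝓝[>] (0:ℝ) :=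
      tendsto_nhdsWithin_of_tendsto_nhds_of_eventually_within _ hlim
        (Eventually.of_forall (fun n => hpos n))
    have hcomp : limsup (fun n : ℕ =>
        ((Real.log (Mnum α (α n)) / (-Real.log (α n)) : ℝ) : EReal)) atTop ≤
        limsup (fun ε : ℝ => ((Real.log (Mnum α ε) / (-Real.log ε) : ℝ) : EReal)) (𝓝[>] 0) := by
      rw [← limsup_comp_seq]
      exact limsup_le_limsup_of_le (u := fun ε : ℝ =>
        ((Real.log (Mnum α ε) / (-Real.log ε) : ℝ) : EReal)) hmap
        (by isBoundedDefault) (by isBoundedDefault)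
    refine le_trans ?_ hcomp
    refine limsup_le_limsup ?_ (by isBoundedDefault) (by isBoundedDefault)
    · filter_upwards [hα1] with n h1
      have hd : (0:ℝ) < -Real.log (α n) := by
        have := Real.log_neg (hpos n) h1
        linarith
      have hle : n ≤ Mnum α (α n) := by
        apply le_csInf
        · obtain ⟨k, hk⟩ := (hlim.eventually (eventually_lt_nhds (hpos n))).exists
          exact ⟨k, hk⟩
        · intro k hk
          by_contra hc
          push_neg at hc
          exact absurd (hdec hc.le) (not_le.2 hk)
      have : Real.log n / (-Real.log (α n)) ≤ Real.log (Mnum α (α n)) / (-Real.log (α n)) :=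
        div_le_div_of_nonneg_right (natlog_mono hle) hd.le
      exact_mod_cast this

end part3
end
end Aux

/-- for `A = {α_n e_n} ⊂ ℓ₂` the thickness exponent equals the
box-counting dimension, which is `limsup (log n)/(-log α_n)`. -/
theorem thickness_eq_dimBox_orthogonal_seq (α : ℕ → ℝ) (hpos : ∀ n, 0 < α n)
    (hdec : Antitone α) (hlim : Tendsto α atTop (𝓝 0)) :
    thickness (Set.range fun n : ℕ => (lp.single 2 n (α n) : lp (fun _ : ℕ => ℝ) 2))
        = dimBox (Set.range fun n : ℕ => (lp.single 2 n (α n) : lp (fun _ : ℕ => ℝ) 2)) ∧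
      dimBox (Set.range fun n : ℕ => (lp.single 2 n (α n) : lp (fun _ : ℕ => ℝ) 2))
        = Filter.limsup
            (fun n : ℕ => ((Real.log n / (-Real.log (α n)) : ℝ) : EReal)) atTop := by
  classical
  have h2pos : (0:ℝ) < Real.sqrt 2 := Real.sqrt_pos.2 (by norm_num)
  have hthick_id : thickness (Set.range fun n : ℕ => (lp.single 2 n (α n) : lp (fun _ : ℕ => ℝ) 2)) =
      limsup (fun ε : ℝ => ((Real.log ((thickNum (Set.range fun n : ℕ => (lp.single 2 n (α n) : lp (fun _ : ℕ => ℝ) 2)) ε).toNat) / (-Real.log ε) : ℝ) : EReal))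
        (𝓝[>] 0) := by
    unfold thickness
    apply limsup_congr
    filter_upwards [self_mem_nhdsWithin] with ε hε
    rw [elog, if_neg (thickNum_ne_top hpos hdec hlim hε)]
    rfl
  have hdim_id : dimBox (Set.range fun n : ℕ => (lp.single 2 n (α n) : lp (fun _ : ℕ => ℝ) 2)) =
      limsup (fun ε : ℝ => ((Real.log ((coverNum (Set.range fun n : ℕ => (lp.single 2 n (α n) : lp (fun _ : ℕ => ℝ) 2)) ε).toNat) / (-Real.log ε) : ℝ) : EReal))
        (𝓝[>] 0) := by
    unfold dimBox
    apply limsup_congr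
    filter_upwards [self_mem_nhdsWithin] with ε hε
    rw [elog, if_neg (coverNum_ne_top hpos hdec hlim hε)]
    rfl
  have hT1 : ∀ᶠ ε : ℝ in 𝓝[>] 0, (thickNum (Set.range fun n : ℕ => (lp.single 2 n (α n) : lp (fun _ : ℕ => ℝ) 2)) ε).toNat ≤ 2 * Mnum α (1 * ε) := by
    filter_upwards [self_mem_nhdsWithin] with ε hε
    have h := thickNum_le_Mnum hpos hdec hlim hε
    have h2 := ENat.toNat_le_toNat h (WithTop.coe_ne_top)
    simp only [ENat.toNat_coe] at h2
    rw [one_mul]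
    omega
  have hT2 : ∀ᶠ ε : ℝ in 𝓝[>] 0,
      Mnum α (Real.sqrt 2 * ε) ≤ 2 * (thickNum (Set.range fun n : ℕ => (lp.single 2 n (α n) : lp (fun _ : ℕ => ℝ) 2)) ε).toNat := by
    filter_upwards [self_mem_nhdsWithin] with ε hε
    have h := Mnum_le_thickNum hpos hdec hlim hε
    rw [← ENat.coe_toNat (thickNum_ne_top hpos hdec hlim hε)] at h
    exact_mod_cast h
  have hTeq := limsup_quot_eq_LM hpos hdec hlim (fun ε => (thickNum (Set.range fun n : ℕ => (lp.single 2 n (α n) : lp (fun _ : ℕ => ℝ) 2)) ε).toNat)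
    one_pos h2pos hT1 hT2
  have hC1 : ∀ᶠ ε : ℝ in 𝓝[>] 0, (coverNum (Set.range fun n : ℕ => (lp.single 2 n (α n) : lp (fun _ : ℕ => ℝ) 2)) ε).toNat ≤ 2 * Mnum α (2⁻¹ * ε) := by
    filter_upwards [self_mem_nhdsWithin,
      (tendsto_mul_nhdsGT (by norm_num : (0:ℝ) < 2⁻¹)).eventually
        (Mnum_eventually_ge hpos hdec hlim 1)] with ε hε hM1
    have h := coverNum_le_Mnum hpos hdec hlim hε
    have h2 := ENat.toNat_le_toNat h (WithTop.coe_ne_top)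
    simp only [ENat.toNat_coe] at h2
    have heq : ε / 2 = 2⁻¹ * ε := by ring
    rw [heq] at h2
    omega
  have hC2 : ∀ᶠ ε : ℝ in 𝓝[>] 0,
      Mnum α (2 * ε) ≤ 2 * (coverNum (Set.range fun n : ℕ => (lp.single 2 n (α n) : lp (fun _ : ℕ => ℝ) 2)) ε).toNat := by
    filter_upwards [self_mem_nhdsWithin] with ε hε
    have h := Mnum_le_coverNum hpos hε
    rw [← ENat.coe_toNat (coverNum_ne_top hpos hdec hlim hε)] at h
    have h3 : Mnum α (2*ε) ≤ (coverNum (Set.range fun n : ℕ => (lp.single 2 n (α n) : lp (fun _ : ℕ => ℝ) 2)) ε).toNat := by exact_mod_cast h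
    omega
  have hCeq := limsup_quot_eq_LM hpos hdec hlim (fun ε => (coverNum (Set.range fun n : ℕ => (lp.single 2 n (α n) : lp (fun _ : ℕ => ℝ) 2)) ε).toNat)
    (by norm_num : (0:ℝ) < 2⁻¹) two_pos hC1 hC2
  exact ⟨hthick_id.trans (hTeq.trans (hCeq.symm.trans hdim_id.symm)),
    hdim_id.trans (hCeq.trans (LM_eq_S hpos hdec hlim))⟩
end

section
/- Let p ∈ [1,∞] with conjugate exponent q, let (α_n) be a decreasing positive sequence tending to 0, and A = {α_n e_n} ⊂ ℓ_p (with p = ∞ meaning c₀). Then the thickness exponent satisfies τ(A; ℓ_p) ≥ q·d_B(A)/(q + d_B(A)). -/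
open Filter Metric Set Pointwise Topology ENNReal

set_option maxHeartbeats 1000000

section Helpers

open Filter Metric Set Topology ENNReal

lemma elog_coe (n : ℕ) : elog (n : ℕ∞) = ((Real.log n : ℝ) : EReal) := by
  simp [elog]

lemma log_nat_mono {m n : ℕ} (h : m ≤ n) : Real.log m ≤ Real.log n := by
  rcases Nat.eq_zero_or_pos m with rfl | hm
  · simp only [Nat.cast_zero, Real.log_zero]
    rcases Nat.eq_zero_or_pos n with rfl | hn
    · simp
    · exact Real.log_natCast_nonneg n
  · exact Real.log_le_log (by exact_mod_cast hm) (by exact_mod_cast h)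

lemma elog_mono : Monotone elog := by
  intro m n h
  rcases eq_or_ne n ⊤ with rfl | hn
  · simp [elog]
  · have hm : m ≠ ⊤ := fun hm => hn (top_le_iff.1 (hm ▸ h))
    simp only [elog, if_neg hm, if_neg hn]
    exact_mod_cast log_nat_mono (by exact_mod_cast ENat.toNat_le_toNat h (by simpa using hn))

lemma le_elog_sInf {S : Set ℕ∞} {r : EReal} (h : ∀ n ∈ S, r ≤ elog n) :
    r ≤ elog (sInf S) := by
  rcases S.eq_empty_or_nonempty with rfl | hne
  · rw [sInf_empty]
    simp [elog]
  · exact h _ (csInf_mem hne)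

lemma norm_single_abs (p : ℝ≥0∞) [Fact (1 ≤ p)] (i : ℕ) (a : ℝ) :
    ‖(lp.single p i a : lp (fun _ : ℕ => ℝ) p)‖ = |a| := by
  rcases eq_or_ne p ⊤ with rfl | hp
  · refine le_antisymm (lp.norm_le_of_forall_le (abs_nonneg a) fun j => ?_) ?_
    · rcases eq_or_ne j i with rfl | hj
      · rw [lp.single_apply_self]; rfl
      · rw [lp.single_apply_ne _ _ _ hj]; simp [abs_nonneg]
    · have := lp.norm_apply_le_norm (E := fun _ : ℕ => ℝ) ENNReal.top_ne_zero
        (lp.single ⊤ i a) i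
      rwa [lp.single_apply_self] at this
  · have hp0 : 0 < p.toReal :=
      ENNReal.toReal_pos (by have := Fact.out (p := 1 ≤ p); positivity) hp
    have := lp.norm_single (E := fun _ : ℕ => ℝ) (zero_lt_one.trans_le (Fact.out : 1 ≤ p)) i a
    simpa using this

lemma one_le_q_toReal {p q : ℝ≥0∞} [Fact (1 ≤ p)] (hpq : p⁻¹ + q⁻¹ = 1) (hq : q ≠ ⊤) :
    1 ≤ q.toReal := by
  have hcq : p.HolderConjugate q := ENNReal.holderConjugate_iff.2 hpq
  have hq1e : (1:ℝ≥0∞) ≤ q := ENNReal.HolderConjugate.one_le q p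
  rw [← ENNReal.toReal_one]
  exact (ENNReal.toReal_le_toReal (by simp) hq).mpr hq1e

/-- evaluation at a coordinate, as a linear map -/
noncomputable def evalL (p : ℝ≥0∞) [Fact (1 ≤ p)] (i : ℕ) :
    lp (fun _ : ℕ => ℝ) p →ₗ[ℝ] ℝ where
  toFun f := f i
  map_add' f g := by
    show (↑(f + g) : ℕ → ℝ) i = (↑f : ℕ → ℝ) i + (↑g : ℕ → ℝ) i
    rw [lp.coeFn_add]; rfl
  map_smul' c f := by
    show (↑(c • f) : ℕ → ℝ) i = c • (↑f : ℕ → ℝ) i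
    rw [lp.coeFn_smul]; rfl

section ASet
variable (p : ℝ≥0∞) [Fact (1 ≤ p)] (α : ℕ → ℝ)

lemma cover_le (hpos : ∀ n, 0 < α n) (hdec : Antitone α) (hlim : Tendsto α atTop (𝓝 0))
    {δ : ℝ} (hδ : 0 < δ) :
    coverNum (Set.range fun n : ℕ => (lp.single p n (α n) : lp (fun _ : ℕ => ℝ) p)) (2*δ)
      ≤ ((sInf {m : ℕ | α m < δ} : ℕ) : ℕ∞) + 1 := by
  classical
  set m₀ : ℕ := sInf {m : ℕ | α m < δ} with hm₀def
  have hne : {m : ℕ | α m < δ}.Nonempty := (hlim.eventually (gt_mem_nhds hδ)).exists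
  have hm₀ : α m₀ < δ := Nat.sInf_mem hne
  set F : Finset (lp (fun _ : ℕ => ℝ) p) :=
    (Finset.range (m₀+1)).image (fun n => (lp.single p n (α n))) with hF
  have hsub : ↑F ⊆ (Set.range fun n : ℕ => (lp.single p n (α n) : lp (fun _ : ℕ => ℝ) p)) := by
    intro x hx
    simp only [hF, Finset.coe_image, Finset.coe_range] at hx
    rcases hx with ⟨n, _, rfl⟩
    exact ⟨n, rfl⟩
  have hcov : (Set.range fun n : ℕ => (lp.single p n (α n) : lp (fun _ : ℕ => ℝ) p))
      ⊆ ⋃ c ∈ F, Metric.ball c (2*δ) := by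
    rintro x ⟨n, rfl⟩
    rcases le_or_gt n m₀ with hn | hn
    · refine Set.mem_biUnion
        (Finset.mem_coe.2 (Finset.mem_image_of_mem _ (Finset.mem_range.2 (Nat.lt_succ_of_le hn))))
        ?_
      simpa using (by positivity : (0:ℝ) < 2*δ)
    · refine Set.mem_biUnion
        (Finset.mem_coe.2 (Finset.mem_image_of_mem _ (Finset.mem_range.2 (Nat.lt_succ_of_le le_rfl))))
        ?_
      rw [Metric.mem_ball, dist_eq_norm]
      have hnn := norm_sub_le (lp.single p n (α n) : lp (fun _ : ℕ => ℝ) p)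
        (lp.single p m₀ (α m₀))
      rw [norm_single_abs, norm_single_abs, abs_of_pos (hpos n), abs_of_pos (hpos m₀)] at hnn
      have hmono := hdec hn.le
      linarith
  have h1 : coverNum (Set.range fun n : ℕ => (lp.single p n (α n) : lp (fun _ : ℕ => ℝ) p)) (2*δ)
      ≤ (F.card : ℕ∞) := sInf_le ⟨F, hsub, hcov, rfl⟩
  refine h1.trans ?_
  have : F.card ≤ m₀ + 1 := le_trans Finset.card_image_le (by simp)
  exact_mod_cast this

lemma alpha_ge_of_lt_sInf {δ : ℝ} {n : ℕ} (hn : n < sInf {m : ℕ | α m < δ}) : δ ≤ α n :=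
  le_of_not_gt (Nat.notMem_of_lt_sInf hn)

lemma dimBox_nonneg' (hpos : ∀ n, 0 < α n) :
    0 ≤ dimBox (Set.range fun n : ℕ => (lp.single p n (α n) : lp (fun _ : ℕ => ℝ) p)) := by
  refine le_limsup_of_frequently_le' (Eventually.frequently ?_)
  have h1 : ∀ᶠ ε : ℝ in 𝓝[>] (0:ℝ), 0 < ε := self_mem_nhdsWithin
  have h2 : ∀ᶠ ε : ℝ in 𝓝[>] (0:ℝ), ε < 1 :=
    eventually_nhdsWithin_of_eventually_nhds (Filter.Tendsto.eventually_lt_const zero_lt_one tendsto_id)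
  filter_upwards [h1, h2] with ε hε hε1
  refine EReal.div_nonneg ?_ ?_
  · have hone : (1 : ℕ∞) ≤ coverNum
        (Set.range fun n : ℕ => (lp.single p n (α n) : lp (fun _ : ℕ => ℝ) p)) ε := by
      refine le_sInf fun n hn => ?_
      obtain ⟨F, hsub, hcov, rfl⟩ := hn
      have hx : (lp.single p 0 (α 0) : lp (fun _ : ℕ => ℝ) p) ∈ ⋃ c ∈ F, Metric.ball c ε :=
        hcov ⟨0, rfl⟩
      rw [Set.mem_iUnion₂] at hx
      obtain ⟨c, hc, -⟩ := hx
      have hFne : F.Nonempty := ⟨c, hc⟩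
      exact_mod_cast Finset.card_pos.2 hFne
    calc (0:EReal) = elog ((1:ℕ) : ℕ∞) := by rw [elog_coe]; simp
      _ ≤ _ := elog_mono (by exact_mod_cast hone)
  · refine EReal.coe_nonneg.2 ?_
    have := Real.log_nonpos hε.le hε1.le
    linarith

lemma thickness_nonneg' (hpos : ∀ n, 0 < α n) :
    0 ≤ thickness (Set.range fun n : ℕ => (lp.single p n (α n) : lp (fun _ : ℕ => ℝ) p)) := by
  refine le_limsup_of_frequently_le' (Eventually.frequently ?_)
  have h1 : ∀ᶠ ε : ℝ in 𝓝[>] (0:ℝ), 0 < ε := self_mem_nhdsWithin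
  have h2 : ∀ᶠ ε : ℝ in 𝓝[>] (0:ℝ), ε < 1 :=
    eventually_nhdsWithin_of_eventually_nhds (Filter.Tendsto.eventually_lt_const zero_lt_one tendsto_id)
  have h3 : ∀ᶠ ε : ℝ in 𝓝[>] (0:ℝ), ε < α 0 :=
    eventually_nhdsWithin_of_eventually_nhds (Filter.Tendsto.eventually_lt_const (hpos 0) tendsto_id)
  filter_upwards [h1, h2, h3] with ε hε hε1 hεα
  refine EReal.div_nonneg ?_ ?_
  · have hone : (1 : ℕ∞) ≤ thickNum
        (Set.range fun n : ℕ => (lp.single p n (α n) : lp (fun _ : ℕ => ℝ) p)) ε := by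
      refine le_sInf fun n hn => ?_
      obtain ⟨V, hfd, rfl, happ⟩ := hn
      haveI := hfd
      have hfr : Module.finrank ℝ V ≠ 0 := by
        intro h0
        have hbot : V = ⊥ := Submodule.finrank_eq_zero.1 h0
        have := happ (lp.single p 0 (α 0)) ⟨0, rfl⟩
        rw [hbot] at this
        rw [Submodule.bot_coe, Metric.infDist_singleton, dist_zero_right,
          norm_single_abs, abs_of_pos (hpos 0)] at this
        linarith
      have : 1 ≤ Module.finrank ℝ V := Nat.one_le_iff_ne_zero.2 hfr
      exact_mod_cast this
    calc (0:EReal) = elog ((1:ℕ) : ℕ∞) := by rw [elog_coe]; simp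
      _ ≤ _ := elog_mono (by exact_mod_cast hone)
  · refine EReal.coe_nonneg.2 ?_
    have := Real.log_nonpos hε.le hε1.le
    linarith

end ASet

end Helpers


lemma core_lemma (p q : ℝ≥0∞) [Fact (1 ≤ p)] (hpq : p⁻¹ + q⁻¹ = 1) (hq : q ≠ ⊤)
    (α : ℕ → ℝ) (hpos : ∀ n, 0 < α n)
    {δ ε : ℝ} (hδ : 0 < δ) (hε : 0 < ε) {N : ℕ} (hα : ∀ n < N, δ ≤ α n)
    (V : Submodule ℝ (lp (fun _ : ℕ => ℝ) p)) (hVfd : FiniteDimensional ℝ V)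
    (hV : ∀ n : ℕ, Metric.infDist (lp.single p n (α n)) (V : Set (lp (fun _ : ℕ => ℝ) p)) ≤ ε)
    (hd : Module.finrank ℝ V < N) :
    δ ≤ ((Module.finrank ℝ V : ℝ) + 1) ^ (1/q.toReal) * ε := by
  classical
  set d := Module.finrank ℝ V with hdd
  set q' := q.toReal with hq'
  have hcq : (ENNReal.HolderConjugate p q) := ENNReal.holderConjugate_iff.2 hpq
  have hq1e : (1:ℝ≥0∞) ≤ q := ENNReal.HolderConjugate.one_le q p
  have hq1 : 1 ≤ q' := by
    rw [hq']
    rw [← ENNReal.toReal_one]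
    exact (ENNReal.toReal_le_toReal (by simp) hq).mpr hq1e
  have hq'pos : 0 < q' := lt_of_lt_of_le zero_lt_one hq1
  -- the linear map from coefficient vectors to functionals on V
  set T : (Fin (d+1) → ℝ) →ₗ[ℝ] (V →ₗ[ℝ] ℝ) :=
    Fintype.linearCombination ℝ (fun i : Fin (d+1) => (evalL p i).comp V.subtype) with hT
  have hker : LinearMap.ker T ≠ ⊥ := by
    have h1 : Module.finrank ℝ (V →ₗ[ℝ] ℝ) = d := by
      rw [Module.finrank_linearMap, Module.finrank_self, mul_one]
    apply LinearMap.ker_ne_bot_of_finrank_lt (K := ℝ)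
    rw [h1, Module.finrank_fin_fun]
    exact Nat.lt_succ_self d
  obtain ⟨c, hcker, hc0⟩ := (Submodule.ne_bot_iff _).1 hker
  have hcT : ∀ v ∈ V, ∑ i : Fin (d+1), c i * (v : ℕ → ℝ) (i : ℕ) = 0 := by
    intro v hv
    have := LinearMap.congr_fun hcker ⟨v, hv⟩
    simpa [hT, Fintype.linearCombination_apply, evalL, mul_comm] using this
  set Nq : ℝ := (∑ i : Fin (d+1), |c i| ^ q') ^ (1/q') with hNq
  have hsum_pos : 0 < ∑ i : Fin (d+1), |c i| ^ q' := by
    obtain ⟨i, hi⟩ : ∃ i, c i ≠ 0 := by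
      by_contra h
      push_neg at h
      exact hc0 (funext h)
    refine Finset.sum_pos' (fun j _ => Real.rpow_nonneg (abs_nonneg _) _) ⟨i, Finset.mem_univ i, ?_⟩
    exact Real.rpow_pos_of_pos (abs_pos.2 hi) _
  have hNqpos : 0 < Nq := Real.rpow_pos_of_pos hsum_pos _
  -- Hölder
  have holder : ∀ x : lp (fun _ : ℕ => ℝ) p,
      |∑ i : Fin (d+1), c i * (x : ℕ → ℝ) (i : ℕ)| ≤ Nq * ‖x‖ := by
    intro x
    have habs : |∑ i : Fin (d+1), c i * (x : ℕ → ℝ) (i : ℕ)|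
        ≤ ∑ i : Fin (d+1), |c i| * |(x : ℕ → ℝ) (i : ℕ)| := by
      refine (Finset.abs_sum_le_sum_abs _ _).trans ?_
      refine Finset.sum_le_sum fun i _ => ?_
      rw [abs_mul]
    rcases eq_or_ne q 1 with hq1' | hqne1
    · -- q = 1, p = ∞
      have hptop : p = ⊤ := (ENNReal.HolderConjugate.eq_top_iff_eq_one p q).2 hq1'
      have hq'1 : q' = 1 := by rw [hq', hq1', ENNReal.toReal_one]
      have hb : ∀ i : Fin (d+1), |(x : ℕ → ℝ) (i : ℕ)| ≤ ‖x‖ := by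
        intro i
        subst hptop
        exact lp.norm_apply_le_norm ENNReal.top_ne_zero x (i : ℕ)
      calc |∑ i : Fin (d+1), c i * (x : ℕ → ℝ) (i : ℕ)|
          ≤ ∑ i : Fin (d+1), |c i| * |(x : ℕ → ℝ) (i : ℕ)| := habs
        _ ≤ ∑ i : Fin (d+1), |c i| * ‖x‖ := by
            refine Finset.sum_le_sum fun i _ => ?_
            exact mul_le_mul_of_nonneg_left (hb i) (abs_nonneg _)
        _ = (∑ i : Fin (d+1), |c i|) * ‖x‖ := by rw [Finset.sum_mul]
        _ = Nq * ‖x‖ := by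
            rw [hNq, hq'1]
            simp [Real.rpow_one]
    · -- 1 < q < ∞ and p finite
      have hp_ne_top : p ≠ ⊤ := by
        intro hptop
        rw [hptop] at hpq
        exact hqne1 ((ENNReal.HolderConjugate.eq_top_iff_eq_one p q).1 hptop)
      set p' := p.toReal with hp'
      have hp0 : p ≠ 0 := by
        have := Fact.out (p := 1 ≤ p); positivity
      have hq0 : q ≠ 0 := ENNReal.HolderConjugate.ne_zero q p
      have hqinvpos : (0:ℝ≥0∞) < q⁻¹ := ENNReal.inv_pos.2 hq
      have hpinv_lt : p⁻¹ < 1 := by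
        calc p⁻¹ < p⁻¹ + q⁻¹ := ENNReal.lt_add_right (by simpa using hp0) hqinvpos.ne'
          _ = 1 := hpq
      have hp1 : 1 < p := ENNReal.inv_lt_one.1 hpinv_lt
      have hp'1 : 1 < p' := by
        rw [hp']
        rw [← ENNReal.toReal_one]
        exact (ENNReal.toReal_lt_toReal (by simp) hp_ne_top).mpr hp1
      have hcq' : p'.HolderConjugate q' := by
        refine Real.holderConjugate_iff.2 ⟨hp'1, ?_⟩
        have h3 : (p⁻¹ + q⁻¹).toReal = p⁻¹.toReal + q⁻¹.toReal :=
          ENNReal.toReal_add (by simpa using hp0) (by simpa using hq0)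
        rw [hpq] at h3
        rw [ENNReal.toReal_inv, ENNReal.toReal_inv] at h3
        rw [hp', hq']
        rw [ENNReal.toReal_one] at h3
        exact h3.symm
      have hp'pos : 0 < p' := lt_trans zero_lt_one hp'1
      have hhold := Real.inner_le_Lp_mul_Lq (s := Finset.univ)
        (fun i : Fin (d+1) => |c i|) (fun i : Fin (d+1) => |(x : ℕ → ℝ) (i : ℕ)|) hcq'.symm
      simp only [abs_abs] at hhold
      have hx_sum : (∑ i : Fin (d+1), |(x : ℕ → ℝ) (i : ℕ)| ^ p') ^ (1/p') ≤ ‖x‖ := by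
        have h4 : ∑ i : Fin (d+1), |(x : ℕ → ℝ) (i : ℕ)| ^ p'
            = ∑ j ∈ Finset.range (d+1), ‖(x : ℕ → ℝ) j‖ ^ p' := by
          simp only [Real.norm_eq_abs]
          exact Fin.sum_univ_eq_sum_range (fun j => |(x : ℕ → ℝ) j| ^ p') _
        have h5 := lp.sum_rpow_le_norm_rpow (by rw [← hp']; exact hp'pos) x (Finset.range (d+1))
        rw [h4]
        calc (∑ j ∈ Finset.range (d+1), ‖(x : ℕ → ℝ) j‖ ^ p') ^ (1/p')
            ≤ (‖x‖ ^ p') ^ (1/p') := by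
              refine Real.rpow_le_rpow ?_ h5 (by positivity)
              exact Finset.sum_nonneg fun j _ => Real.rpow_nonneg (norm_nonneg _) _
          _ = ‖x‖ := by
              rw [← Real.rpow_mul (norm_nonneg _), mul_one_div_cancel hp'pos.ne', Real.rpow_one]
      calc |∑ i : Fin (d+1), c i * (x : ℕ → ℝ) (i : ℕ)|
          ≤ ∑ i : Fin (d+1), |c i| * |(x : ℕ → ℝ) (i : ℕ)| := habs
        _ ≤ (∑ i : Fin (d+1), |c i| ^ q') ^ (1/q')
            * (∑ i : Fin (d+1), |(x : ℕ → ℝ) (i : ℕ)| ^ p') ^ (1/p') := hhold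
        _ = Nq * (∑ i : Fin (d+1), |(x : ℕ → ℝ) (i : ℕ)| ^ p') ^ (1/p') := by
            rw [hNq]
        _ ≤ Nq * ‖x‖ := mul_le_mul_of_nonneg_left hx_sum hNqpos.le
  -- key coordinate bound
  have hcoord : ∀ i : Fin (d+1), δ * |c i| ≤ Nq * ε := by
    intro i
    have hiN : (i : ℕ) < N := lt_of_lt_of_le i.2 hd
    have hαi : δ ≤ α (i : ℕ) := hα _ hiN
    set x : lp (fun _ : ℕ => ℝ) p := lp.single p (i : ℕ) (α (i : ℕ)) with hx
    have hsingle : ∑ j : Fin (d+1), c j * (x : ℕ → ℝ) (j : ℕ) = c i * α (i : ℕ) := by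
      rw [hx]
      rw [Finset.sum_eq_single i]
      · rw [lp.single_apply_self]
      · intro j _ hji
        have : (j : ℕ) ≠ (i : ℕ) := fun h => hji (Fin.ext h)
        rw [lp.single_apply_ne _ _ _ this, mul_zero]
      · intro h
        exact absurd (Finset.mem_univ i) h
    have hbound : ∀ v ∈ V, |c i| * α (i : ℕ) ≤ Nq * ‖x - v‖ := by
      intro v hv
      have h6 : ∑ j : Fin (d+1), c j * ((x - v : lp (fun _ : ℕ => ℝ) p) : ℕ → ℝ) (j : ℕ)
          = c i * α (i : ℕ) := by
        have h7 : ∀ j : Fin (d+1), ((x - v : lp (fun _ : ℕ => ℝ) p) : ℕ → ℝ) (j : ℕ)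
            = (x : ℕ → ℝ) (j : ℕ) - (v : ℕ → ℝ) (j : ℕ) := by
          intro j
          rw [lp.coeFn_sub]
          rfl
        calc ∑ j : Fin (d+1), c j * ((x - v : lp (fun _ : ℕ => ℝ) p) : ℕ → ℝ) (j : ℕ)
            = ∑ j : Fin (d+1), (c j * (x : ℕ → ℝ) (j : ℕ) - c j * (v : ℕ → ℝ) (j : ℕ)) := by
              refine Finset.sum_congr rfl fun j _ => ?_
              rw [h7 j, mul_sub]
          _ = ∑ j : Fin (d+1), c j * (x : ℕ → ℝ) (j : ℕ)
              - ∑ j : Fin (d+1), c j * (v : ℕ → ℝ) (j : ℕ) := Finset.sum_sub_distrib _ _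
          _ = c i * α (i : ℕ) := by rw [hsingle, hcT v hv, sub_zero]
      have h8 := holder (x - v)
      rw [h6] at h8
      calc |c i| * α (i : ℕ) = |c i * α (i : ℕ)| := by
            rw [abs_mul, abs_of_pos (hpos _)]
        _ ≤ Nq * ‖x - v‖ := h8
    have hVne : (V : Set (lp (fun _ : ℕ => ℝ) p)).Nonempty := ⟨0, V.zero_mem⟩
    have hinf : |c i| * α (i : ℕ) / Nq ≤ Metric.infDist x (V : Set (lp (fun _ : ℕ => ℝ) p)) := by
      by_contra hlt
      push_neg at hlt
      obtain ⟨v, hv, hvd⟩ := (Metric.infDist_lt_iff hVne).1 hlt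
      rw [dist_eq_norm] at hvd
      have h2 : Nq * ‖x - v‖ < Nq * (|c i| * α (i:ℕ) / Nq) := mul_lt_mul_of_pos_left hvd hNqpos
      have h3 : Nq * (|c i| * α (i:ℕ) / Nq) = |c i| * α (i:ℕ) := by field_simp
      have h4 := hbound v hv
      rw [h3] at h2
      linarith
    have h9 : |c i| * α (i : ℕ) / Nq ≤ ε := le_trans hinf (hV (i : ℕ))
    have h10 : |c i| * α (i : ℕ) ≤ Nq * ε := by
      rw [div_le_iff₀ hNqpos] at h9
      linarith [h9]
    calc δ * |c i| ≤ α (i : ℕ) * |c i| := mul_le_mul_of_nonneg_right hαi (abs_nonneg _)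
      _ = |c i| * α (i : ℕ) := mul_comm _ _
      _ ≤ Nq * ε := h10
  -- conclude
  have hsum_le : ∑ i : Fin (d+1), |c i| ^ q' ≤ (d+1 : ℝ) * (Nq * ε / δ) ^ q' := by
    calc ∑ i : Fin (d+1), |c i| ^ q' ≤ ∑ _i : Fin (d+1), (Nq * ε / δ) ^ q' := by
          refine Finset.sum_le_sum fun i _ => ?_
          refine Real.rpow_le_rpow (abs_nonneg _) ?_ hq'pos.le
          rw [le_div_iff₀ hδ]
          calc |c i| * δ = δ * |c i| := mul_comm _ _
            _ ≤ Nq * ε := hcoord i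
      _ = (d+1 : ℝ) * (Nq * ε / δ) ^ q' := by
          rw [Finset.sum_const, Finset.card_univ, Fintype.card_fin, nsmul_eq_mul]
          push_cast
          ring
  have hNq_pow : Nq ^ q' = ∑ i : Fin (d+1), |c i| ^ q' := by
    rw [hNq, ← Real.rpow_mul hsum_pos.le, one_div_mul_cancel hq'pos.ne', Real.rpow_one]
  have hfinal : Nq ^ q' ≤ (d+1 : ℝ) * (Nq * ε / δ) ^ q' := by rw [hNq_pow]; exact hsum_le
  have hNε : 0 < Nq * ε / δ := by positivity
  have hsplit : (Nq * ε / δ) ^ q' = Nq ^ q' * (ε / δ) ^ q' := by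
    rw [mul_div_assoc, Real.mul_rpow hNqpos.le (by positivity)]
  rw [hsplit] at hfinal
  have hNqq : 0 < Nq ^ q' := Real.rpow_pos_of_pos hNqpos _
  have h11 : 1 ≤ (d+1 : ℝ) * (ε / δ) ^ q' := by
    refine le_of_mul_le_mul_left ?_ hNqq
    calc Nq ^ q' * 1 = Nq ^ q' := mul_one _
      _ ≤ (d+1 : ℝ) * (Nq ^ q' * (ε / δ) ^ q') := hfinal
      _ = Nq ^ q' * ((d+1 : ℝ) * (ε / δ) ^ q') := by ring
  -- now δ/ε ≤ (d+1)^(1/q')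
  have h12 : (δ / ε) ^ q' ≤ (d+1 : ℝ) := by
    have hde : (0:ℝ) < δ / ε := by positivity
    have hmul : (δ / ε) ^ q' * (ε / δ) ^ q' = 1 := by
      rw [← Real.mul_rpow hde.le (by positivity)]
      rw [div_mul_div_comm, mul_comm ε δ]
      rw [div_self (by positivity : δ * ε ≠ 0)]
      exact Real.one_rpow _
    have h13 : (δ / ε) ^ q' * 1 ≤ (δ / ε) ^ q' * ((d+1 : ℝ) * (ε / δ) ^ q') :=
      mul_le_mul_of_nonneg_left h11 (Real.rpow_nonneg hde.le _)
    calc (δ / ε) ^ q' = (δ / ε) ^ q' * 1 := (mul_one _).symm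
      _ ≤ (δ / ε) ^ q' * ((d+1 : ℝ) * (ε / δ) ^ q') := h13
      _ = (d+1 : ℝ) * ((δ / ε) ^ q' * (ε / δ) ^ q') := by ring
      _ = (d+1 : ℝ) := by rw [hmul, mul_one]
  have h14 : δ / ε ≤ ((d:ℝ)+1) ^ (1/q') := by
    have hde : (0:ℝ) < δ / ε := by positivity
    calc δ / ε = ((δ / ε) ^ q') ^ (1/q') := by
          rw [← Real.rpow_mul hde.le, mul_one_div_cancel hq'pos.ne', Real.rpow_one]
      _ ≤ ((d:ℝ)+1) ^ (1/q') := by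
          refine Real.rpow_le_rpow (Real.rpow_nonneg hde.le _) ?_ (by positivity)
          exact_mod_cast h12
  rw [div_le_iff₀ hε] at h14
  calc δ ≤ ((d:ℝ)+1) ^ (1/q') * ε := h14
    _ = ((Module.finrank ℝ V : ℝ) + 1) ^ (1/q.toReal) * ε := by rw [← hdd, ← hq']



open Filter Metric Set Topology ENNReal in
lemma main_step (p q : ℝ≥0∞) [Fact (1 ≤ p)] (hpq : p⁻¹ + q⁻¹ = 1) (hq : q ≠ ⊤)
    (α : ℕ → ℝ) (hpos : ∀ n, 0 < α n) (hdec : Antitone α) (hlim : Tendsto α atTop (𝓝 0))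
    {d' s : ℝ} (hd'0 : 0 < d')
    (hd'D : (d' : EReal) <
      dimBox (Set.range fun n : ℕ => (lp.single p n (α n) : lp (fun _ : ℕ => ℝ) p)))
    (hs0 : 0 ≤ s) (hs : s < q.toReal * d' / (q.toReal + d')) :
    (s : EReal) ≤
      thickness (Set.range fun n : ℕ => (lp.single p n (α n) : lp (fun _ : ℕ => ℝ) p)) := by
  classical
  set q' : ℝ := q.toReal with hq'
  have hq1 : 1 ≤ q' := one_le_q_toReal hpq hq
  have hq'pos : 0 < q' := lt_of_lt_of_le zero_lt_one hq1
  set β : ℝ := (q' + d') / q' with hβ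
  have hβpos : 0 < β := by positivity
  have hβ1 : 1 < β := by
    rw [hβ, lt_div_iff₀ hq'pos]
    linarith
  have htarget : q' * d' / (q' + d') = d' / β := by
    rw [hβ]
    field_simp
  have hsβ : s * β < d' := by
    rw [htarget] at hs
    calc s * β < (d' / β) * β := by
          exact mul_lt_mul_of_pos_right hs hβpos
      _ = d' := by field_simp
  set C : ℝ := max 1 (max ((Real.log 2)/d') (((1+s*β)*Real.log 2 + 1)/(d'-s*β))) with hC
  have hev : ∀ᶠ ε : ℝ in 𝓝[>] (0:ℝ), Real.log ε ≤ -C :=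
    Real.tendsto_log_nhdsGT_zero.eventually (eventually_le_atBot (-C))
  have hfreq : ∃ᶠ ε : ℝ in 𝓝[>] (0:ℝ), (d' : EReal) <
      elog (coverNum (Set.range fun n : ℕ => (lp.single p n (α n) : lp (fun _ : ℕ => ℝ) p)) ε)
        / ((-Real.log ε : ℝ) : EReal) :=
    frequently_lt_of_lt_limsup (by isBoundedDefault) hd'D
  have hcomb := hfreq.and_eventually (hev.and self_mem_nhdsWithin)
  have hkey : ∃ᶠ ε : ℝ in 𝓝[>] (0:ℝ), (s : EReal) ≤
      (fun η : ℝ => elog (thickNum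
          (Set.range fun n : ℕ => (lp.single p n (α n) : lp (fun _ : ℕ => ℝ) p)) η)
        / ((-Real.log η : ℝ) : EReal)) ((ε/2) ^ β) := by
    refine hcomb.mono ?_
    rintro ε ⟨hd, hlog, (hε : (0:ℝ) < ε)⟩
    simp only
    -- basic facts about ε
    have ht1 : 1 ≤ -Real.log ε := by
      have : (1:ℝ) ≤ C := le_max_left _ _
      linarith
    set t : ℝ := -Real.log ε with htdef
    have ht2 : Real.log 2 / d' ≤ t := by
      have h2 : Real.log 2 / d' ≤ C := le_trans (le_max_left _ _) (le_max_right _ _)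
      linarith
    have ht3 : ((1+s*β)*Real.log 2 + 1)/(d'-s*β) ≤ t := by
      have h2 : ((1+s*β)*Real.log 2 + 1)/(d'-s*β) ≤ C :=
        le_trans (le_max_right _ _) (le_max_right _ _)
      linarith
    have htpos : 0 < t := lt_of_lt_of_le zero_lt_one ht1
    have hε1 : ε < 1 := by
      by_contra hge
      push_neg at hge
      have := Real.log_nonneg hge
      have : t ≤ 0 := by rw [htdef]; linarith
      linarith
    set δ : ℝ := ε / 2 with hδdef
    have hδpos : 0 < δ := by positivity
    have hδ1 : δ < 1 := by rw [hδdef]; linarith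
    set M : ℕ := sInf {m : ℕ | α m < δ} with hMdef
    -- covering number bound gives a lower bound on M
    have hcover := cover_le p α hpos hdec hlim hδpos
    rw [show 2 * δ = ε by rw [hδdef]; ring] at hcover
    have hbpos : (0:EReal) < ((-Real.log ε : ℝ) : EReal) := by
      exact_mod_cast htpos
    have hmul : ((d' * t : ℝ) : EReal) ≤
        elog (coverNum (Set.range fun n : ℕ =>
          (lp.single p n (α n) : lp (fun _ : ℕ => ℝ) p)) ε) := by
      rw [EReal.coe_mul]
      exact (EReal.le_div_iff_mul_le hbpos (EReal.coe_ne_top _)).1 hd.le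
    have hlogM : d' * t ≤ Real.log ((M:ℝ) + 1) := by
      have h2 : elog (coverNum (Set.range fun n : ℕ =>
          (lp.single p n (α n) : lp (fun _ : ℕ => ℝ) p)) ε) ≤ elog (((M+1 : ℕ)) : ℕ∞) := by
        refine elog_mono ?_
        refine le_trans hcover ?_
        push_cast
        rfl
      rw [elog_coe] at h2
      have h3 := le_trans hmul h2
      rw [EReal.coe_le_coe_iff] at h3
      push_cast at h3
      exact h3
    have hM : ε ^ (-d') ≤ (M:ℝ) + 1 := by
      have hMpos : (0:ℝ) < (M:ℝ) + 1 := by positivity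
      have h4 : Real.exp (d' * t) ≤ (M:ℝ) + 1 := by
        rw [← Real.exp_log hMpos]
        exact Real.exp_le_exp.2 hlogM
      rw [Real.rpow_def_of_pos hε]
      calc Real.exp (Real.log ε * (-d')) = Real.exp (d' * t) := by
            congr 1
            rw [htdef]
            ring
        _ ≤ (M:ℝ) + 1 := h4
    set ε' : ℝ := δ ^ β with hε'def
    have hε'pos : 0 < ε' := Real.rpow_pos_of_pos hδpos _
    have hε'1 : ε' < 1 := Real.rpow_lt_one hδpos.le hδ1 hβpos
    set B : ℝ := ε ^ (-d') with hBdef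
    have hBpos : 0 < B := Real.rpow_pos_of_pos hε _
    have hB2 : 2 ≤ B := by
      have h5 : Real.log 2 ≤ d' * t := by
        rw [div_le_iff₀ hd'0] at ht2
        linarith
      have h6 : Real.exp (Real.log 2) ≤ Real.exp (d' * t) := Real.exp_le_exp.2 h5
      rw [Real.exp_log zero_lt_two] at h6
      calc (2:ℝ) ≤ Real.exp (d' * t) := h6
        _ = B := by
            rw [hBdef, Real.rpow_def_of_pos hε]
            congr 1
            rw [htdef]; ring
    -- lower bound for thickNum
    have hthick : ((Real.log (B/2) : ℝ) : EReal) ≤ elog (thickNum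
        (Set.range fun n : ℕ => (lp.single p n (α n) : lp (fun _ : ℕ => ℝ) p)) ε') := by
      refine le_elog_sInf fun n hn => ?_
      obtain ⟨V, hfd, rfl, happ⟩ := hn
      have happ' : ∀ k : ℕ, Metric.infDist (lp.single p k (α k))
          (V : Set (lp (fun _ : ℕ => ℝ) p)) ≤ ε' := fun k => happ _ ⟨k, rfl⟩
      set D : ℕ := Module.finrank ℝ V with hDdef
      have hD : B/2 ≤ (D:ℝ) := by
        rcases lt_or_ge D M with hlt | hge
        · have hcore := core_lemma p q hpq hq α hpos hδpos hε'pos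
            (fun n hn => alpha_ge_of_lt_sInf α hn) V hfd happ' hlt
          have h1 : δ / ε' ≤ ((D:ℝ)+1) ^ (1/q') := by
            rw [div_le_iff₀ hε'pos]
            exact hcore
          have h2 : (δ/ε') ^ q' ≤ (D:ℝ)+1 := by
            calc (δ/ε') ^ q' ≤ (((D:ℝ)+1) ^ (1/q')) ^ q' :=
                  Real.rpow_le_rpow (by positivity) h1 hq'pos.le
              _ = (D:ℝ)+1 := by
                  rw [← Real.rpow_mul (by positivity), one_div_mul_cancel hq'pos.ne',
                    Real.rpow_one]
          have h3 : (δ/ε') ^ q' = δ ^ (-d') := by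
            rw [hε'def]
            rw [show δ / δ ^ β = δ ^ (1-β) by
              rw [Real.rpow_sub hδpos, Real.rpow_one]]
            rw [← Real.rpow_mul hδpos.le]
            congr 1
            rw [hβ]
            field_simp
            ring
          have h4 : B ≤ δ ^ (-d') := by
            rw [hBdef]
            refine Real.rpow_le_rpow_of_nonpos hδpos (by rw [hδdef]; linarith) (by linarith)
          rw [h3] at h2
          linarith
        · have h5 : (M:ℝ) ≤ (D:ℝ) := Nat.cast_le.2 hge
          linarith
      rw [elog_coe]
      have hB2' : (0:ℝ) < B/2 := by linarith
      exact EReal.coe_le_coe_iff.2 (Real.log_le_log hB2' hD)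
    -- put the pieces together
    have hlogε' : Real.log ε' = β * Real.log δ := Real.log_rpow hδpos β
    have hlogδ : Real.log δ = Real.log ε - Real.log 2 := by
      rw [hδdef, Real.log_div hε.ne' two_ne_zero]
    have hbpos' : (0:EReal) < ((-Real.log ε' : ℝ) : EReal) := by
      have : 0 < -Real.log ε' := by
        have := Real.log_neg hε'pos hε'1
        linarith
      exact_mod_cast this
    rw [EReal.le_div_iff_mul_le hbpos' (EReal.coe_ne_top _), ← EReal.coe_mul]
    refine le_trans (EReal.coe_le_coe_iff.2 ?_) hthick
    -- real inequality : s * (-log ε') ≤ log (B/2)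
    have hlogB : Real.log (B/2) = d' * t - Real.log 2 := by
      rw [hBdef, Real.log_div hBpos.ne' two_ne_zero, Real.log_rpow hε]
      rw [htdef]; ring
    have hlogε'2 : -Real.log ε' = β * (Real.log 2 + t) := by
      rw [hlogε', hlogδ, htdef]; ring
    rw [hlogB, hlogε'2]
    have hdsb : 0 < d' - s*β := by linarith
    rw [div_le_iff₀ hdsb] at ht3
    have hlog2pos : 0 < Real.log 2 := Real.log_pos one_lt_two
    nlinarith [ht3]
  -- transfer along ε ↦ (ε/2)^β
  have htend : Tendsto (fun ε : ℝ => (ε/2) ^ β) (𝓝[>] (0:ℝ)) (𝓝[>] (0:ℝ)) := by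
    have h1 : Tendsto (fun ε : ℝ => ε/2) (𝓝[>] (0:ℝ)) (𝓝[>] (0:ℝ)) := by
      refine tendsto_nhdsWithin_of_tendsto_nhds_of_eventually_within _ ?_ ?_
      · have : Tendsto (fun ε : ℝ => ε/2) (𝓝 (0:ℝ)) (𝓝 ((0:ℝ)/2)) :=
          (continuous_id.div_const 2).tendsto 0
        simpa using this.mono_left nhdsWithin_le_nhds
      · filter_upwards [self_mem_nhdsWithin] with x (hx : (0:ℝ) < x)
        exact div_pos hx two_pos
    have h2 : Tendsto (fun x : ℝ => x ^ β) (𝓝[>] (0:ℝ)) (𝓝[>] (0:ℝ)) := by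
      refine tendsto_nhdsWithin_of_tendsto_nhds_of_eventually_within _ ?_ ?_
      · have hc : ContinuousAt (fun x : ℝ => x ^ β) 0 :=
          Real.continuousAt_rpow_const 0 β (Or.inr hβpos.le)
        have := hc.tendsto.mono_left (nhdsWithin_le_nhds (s := Set.Ioi (0:ℝ)))
        rwa [Real.zero_rpow hβpos.ne'] at this
      · filter_upwards [self_mem_nhdsWithin] with x (hx : (0:ℝ) < x)
        exact Real.rpow_pos_of_pos hx β
    exact h2.comp h1
  exact le_limsup_of_frequently_le' (htend.frequently hkey)

/-- for `A = {α_n e_n} ⊂ ℓ_p` with conjugate exponent `q`,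
`τ(A) ≥ q d_B(A)/(q + d_B(A))`. -/
theorem thickness_orthogonal_seq_ge (p q : ℝ≥0∞) [Fact (1 ≤ p)] (hpq : p⁻¹ + q⁻¹ = 1)
    (α : ℕ → ℝ) (hpos : ∀ n, 0 < α n) (hdec : Antitone α)
    (hlim : Tendsto α atTop (𝓝 0)) :
    (q : EReal) * dimBox (Set.range fun n : ℕ => (lp.single p n (α n) : lp (fun _ : ℕ => ℝ) p)) /
        ((q : EReal) + dimBox (Set.range fun n : ℕ => (lp.single p n (α n) : lp (fun _ : ℕ => ℝ) p)))
      ≤ thickness (Set.range fun n : ℕ => (lp.single p n (α n) : lp (fun _ : ℕ => ℝ) p)) := by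
  classical
  have hτ0 : 0 ≤ thickness
      (Set.range fun n : ℕ => (lp.single p n (α n) : lp (fun _ : ℕ => ℝ) p)) :=
    thickness_nonneg' p α hpos
  have hD0 : 0 ≤ dimBox
      (Set.range fun n : ℕ => (lp.single p n (α n) : lp (fun _ : ℕ => ℝ) p)) :=
    dimBox_nonneg' p α hpos
  set DB : EReal := dimBox
      (Set.range fun n : ℕ => (lp.single p n (α n) : lp (fun _ : ℕ => ℝ) p)) with hDB
  have hDnebot : DB ≠ ⊥ := (lt_of_lt_of_le EReal.bot_lt_zero hD0).ne'
  rcases eq_or_ne q ⊤ with rfl | hqt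
  · rw [EReal.coe_ennreal_top, EReal.top_add_of_ne_bot hDnebot, EReal.div_top]
    exact hτ0
  have hqnebot : (q : EReal) ≠ ⊥ :=
    (lt_of_lt_of_le EReal.bot_lt_zero (EReal.coe_ennreal_nonneg q)).ne'
  rcases eq_or_ne DB ⊤ with hDt | hDnt
  · rw [hDt, EReal.add_top_of_ne_bot hqnebot, EReal.div_top]
    exact hτ0
  rcases eq_or_lt_of_le hD0 with hD00 | hDpos
  · rw [← hD00, mul_zero, add_zero, EReal.zero_div]
    exact hτ0
  -- main case : q ≠ ⊤, 0 < DB < ⊤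
  set q' : ℝ := q.toReal with hq'
  have hq1 : 1 ≤ q' := one_le_q_toReal hpq hqt
  have hq'pos : 0 < q' := lt_of_lt_of_le zero_lt_one hq1
  have hqco : (q : EReal) = ((q' : ℝ) : EReal) := by
    have h1 : (q : EReal) ≠ ⊤ := fun h => hqt (EReal.coe_ennreal_eq_top_iff.1 h)
    rw [← EReal.coe_toReal h1 hqnebot, EReal.toReal_coe_ennreal]
  set D' : ℝ := DB.toReal with hD'
  have hDco : DB = ((D' : ℝ) : EReal) := (EReal.coe_toReal hDnt hDnebot).symm
  have hD'pos : 0 < D' := by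
    rw [hDco] at hDpos
    exact_mod_cast hDpos
  have hLHS : (q : EReal) * DB / ((q : EReal) + DB)
      = ((q' * D' / (q' + D') : ℝ) : EReal) := by
    rw [hqco, hDco, ← EReal.coe_mul, ← EReal.coe_add, ← EReal.coe_div]
  rw [hLHS]
  by_contra hlt
  push_neg at hlt
  obtain ⟨z, hz1, hz2⟩ := exists_between hlt
  have hzneb : z ≠ ⊥ := (EReal.bot_lt_zero.trans (lt_of_le_of_lt hτ0 hz1)).ne'
  have hznt : z ≠ ⊤ := hz2.ne_top
  obtain ⟨zr, rfl⟩ : ∃ r : ℝ, z = (r : EReal) := ⟨z.toReal, (EReal.coe_toReal hznt hzneb).symm⟩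
  have hzr0 : 0 ≤ zr := by exact_mod_cast hτ0.trans hz1.le
  have hzrlt : zr < q' * D' / (q' + D') := by exact_mod_cast hz2
  obtain ⟨d', hd'0, hd'D, hd's⟩ :
      ∃ d' : ℝ, 0 < d' ∧ d' < D' ∧ zr < q' * d' / (q' + d') := by
    have hcont : ContinuousAt (fun tt : ℝ => q' * tt / (q' + tt)) D' := by
      refine ContinuousAt.div ?_ ?_ (by positivity)
      · exact (continuous_const.mul continuous_id).continuousAt
      · exact (continuous_const.add continuous_id).continuousAt
    have hev2 : ∀ᶠ tt in 𝓝 D', zr < q' * tt / (q' + tt) :=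
      hcont.eventually_const_lt hzrlt
    have hev3 : ∀ᶠ tt in 𝓝 D', 0 < tt := eventually_gt_nhds hD'pos
    have := ((hev2.and hev3).filter_mono (nhdsWithin_le_nhds (s := Set.Iio D'))).and
      self_mem_nhdsWithin
    obtain ⟨tt, ⟨h1, h2⟩, (h3 : tt < D')⟩ := this.exists
    exact ⟨tt, h2, h3, h1⟩
  have hmain := main_step p q hpq hqt α hpos hdec hlim hd'0
    (by rw [← hDB, hDco]; exact_mod_cast hd'D) hzr0 hd's
  exact absurd hmain (not_le.2 hz1)
end
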